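/- Let G be a connected finite simple graph, not isomorphic to K₂, which is 1-well-covered. Then G has at least 2·α(G) + 1 vertices, and |A| < |N(A)| for every nonempty independent set A of G. -/

import Mathlib

open Finset
open scoped Classical

variable {V : Type*}

/-- `S` is an independent set in `G`: its vertices are pairwise non-adjacent. -/
def IsIndepSet (G : SimpleGraph V) (S : Finset V) : Prop :=
  ∀ ⦃u⦄, u ∈ S → ∀ ⦃v⦄, v ∈ S → ¬ G.Adj u v

/-- The neighborhood `N(S)`: all vertices having at least one neighbor in `S`. -/
noncomputable def neigh [Fintype V] (G : SimpleGraph V) (S : Finset V) : Finset V :=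
  Finset.univ.filter fun v => ∃ u ∈ S, G.Adj u v

/-- The independence number `α(G)`: the maximum size of an independent set. -/
noncomputable def indepNum [Fintype V] (G : SimpleGraph V) : ℕ :=
  (Finset.univ.filter fun S : Finset V => IsIndepSet G S).sup Finset.card

/-- `s_k`: the number of independent sets of size `k` in `G`. -/
noncomputable def indepCount [Fintype V] (G : SimpleGraph V) (k : ℕ) : ℕ :=
  (Finset.univ.filter fun S : Finset V => IsIndepSet G S ∧ S.card = k).card

/-- A maximal independent set (not properly contained in another independent set). -/
def IsMaximalIndepSet (G : SimpleGraph V) (S : Finset V) : Prop :=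
  IsIndepSet G S ∧ ∀ T : Finset V, IsIndepSet G T → S ⊆ T → S = T

/-- `G` is well-covered: all maximal independent sets have the same cardinality. -/
def IsWellCovered (G : SimpleGraph V) : Prop :=
  ∀ S T : Finset V, IsMaximalIndepSet G S → IsMaximalIndepSet G T → S.card = T.card

/-- `G` is 1-well-covered: it is well-covered, has at least two vertices, and
deleting any vertex leaves a well-covered graph. -/
def IsOneWellCovered [Fintype V] (G : SimpleGraph V) : Prop :=
  IsWellCovered G ∧ 2 ≤ Fintype.card V ∧
    ∀ v : V, IsWellCovered (G.induce ({v}ᶜ : Set V))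

/-- The corona `H ∘ K₂`: for each vertex `v` of `H`, two new vertices
(`(v, false)` and `(v, true)`) adjacent to each other and to `v` are added. -/
def corona2 (H : SimpleGraph V) : SimpleGraph (V ⊕ V × Bool) :=
  SimpleGraph.fromRel fun x y =>
    match x, y with
    | Sum.inl u, Sum.inl v => H.Adj u v
    | Sum.inl u, Sum.inr (v, _) => u = v
    | Sum.inr (u, _), Sum.inr (v, _) => u = v
    | _, _ => False

/-- `T` is maximal independent among sets avoiding `F`. -/
def MaxAvoid [Fintype V] (G : SimpleGraph V) (F : Set V) (T : Finset V) : Prop :=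
  IsIndepSet G T ∧ (∀ t ∈ T, t ∉ F) ∧ ∀ w, w ∉ F → w ∉ T → ∃ u ∈ T, G.Adj u w

lemma indep_insert {G : SimpleGraph V} {T : Finset V} {w : V}
    (hTi : IsIndepSet G T) (h : ∀ u ∈ T, ¬ G.Adj u w) : IsIndepSet G (insert w T) := by
  intro u hu x hx hadj
  rcases mem_insert.1 hu with h1 | h1
  · rcases mem_insert.1 hx with h2 | h2
    · subst h1; subst h2; exact G.loopless.irrefl _ hadj
    · subst h1; exact h x h2 hadj.symm
  · rcases mem_insert.1 hx with h2 | h2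
    · subst h2; exact h u h1 hadj
    · exact hTi h1 h2 hadj

lemma exists_maxAvoid [Fintype V] (G : SimpleGraph V) (F : Set V) (A : Finset V)
    (hA : IsIndepSet G A) (hAF : ∀ a ∈ A, a ∉ F) :
    ∃ T, A ⊆ T ∧ MaxAvoid G F T := by
  classical
  set C := Finset.univ.filter
    (fun T : Finset V => IsIndepSet G T ∧ (∀ t ∈ T, t ∉ F) ∧ A ⊆ T) with hC
  have hACmem : A ∈ C := by
    simp only [hC, mem_filter, mem_univ, true_and]
    exact ⟨hA, hAF, Finset.Subset.refl _⟩
  obtain ⟨T, hTC, hmax⟩ := C.exists_max_image Finset.card ⟨A, hACmem⟩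
  simp only [hC, mem_filter, mem_univ, true_and] at hTC
  obtain ⟨hTi, hTF, hAT⟩ := hTC
  refine ⟨T, hAT, hTi, hTF, ?_⟩
  intro w hwF hwT
  by_contra hno
  push_neg at hno
  have hins : insert w T ∈ C := by
    simp only [hC, mem_filter, mem_univ, true_and]
    refine ⟨indep_insert hTi hno, ?_, hAT.trans (subset_insert _ _)⟩
    intro t ht
    rcases mem_insert.1 ht with rfl | ht
    · exact hwF
    · exact hTF t ht
  have := hmax _ hins
  rw [Finset.card_insert_of_notMem hwT] at this
  omega

lemma maxAvoid_empty_iff [Fintype V] (G : SimpleGraph V) (S : Finset V) :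
    MaxAvoid G (∅ : Set V) S ↔ IsMaximalIndepSet G S := by
  constructor
  · rintro ⟨hSi, -, hdom⟩
    refine ⟨hSi, fun T hT hST => Finset.Subset.antisymm hST (fun x hx => ?_)⟩
    by_contra hxS
    obtain ⟨u, huS, hadj⟩ := hdom x (Set.notMem_empty x) hxS
    exact hT (hST huS) hx hadj
  · rintro ⟨hSi, hmax⟩
    refine ⟨hSi, fun t _ => Set.notMem_empty t, ?_⟩
    intro w _ hwS
    by_contra hno
    push_neg at hno
    have := hmax (insert w S) (indep_insert hSi hno) (subset_insert _ _)
    exact hwS (this ▸ mem_insert_self w S)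

lemma indep_card_le_indepNum [Fintype V] (G : SimpleGraph V) {S : Finset V}
    (hS : IsIndepSet G S) : S.card ≤ indepNum G :=
  Finset.le_sup (by simpa using hS)

lemma exists_maximum [Fintype V] (G : SimpleGraph V) :
    ∃ S₀ : Finset V, IsMaximalIndepSet G S₀ ∧ S₀.card = indepNum G := by
  classical
  have hne : (Finset.univ.filter fun S : Finset V => IsIndepSet G S).Nonempty :=
    ⟨∅, Finset.mem_filter.2 ⟨Finset.mem_univ _, fun u hu => absurd hu (Finset.notMem_empty u)⟩⟩
  obtain ⟨S₀, hS₀, hsup⟩ := Finset.exists_mem_eq_sup _ hne Finset.card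
  simp only [mem_filter, mem_univ, true_and] at hS₀
  refine ⟨S₀, ⟨hS₀, ?_⟩, hsup.symm⟩
  intro T hT hsub
  exact Finset.eq_of_subset_of_card_le hsub (hsup ▸ indep_card_le_indepNum G hT)

lemma maximal_card [Fintype V] (G : SimpleGraph V) (hWC : IsWellCovered G)
    {S : Finset V} (hS : IsMaximalIndepSet G S) : S.card = indepNum G := by
  obtain ⟨S₀, hS₀, hcard⟩ := exists_maximum G
  rw [← hcard]
  exact hWC S S₀ hS hS₀

-- NEW STAGE 2

/-- transfer: MaxAvoid {v} sets have equal cards when `G - v` is well-covered -/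
lemma maxAvoid_singleton_card_eq [Fintype V] (G : SimpleGraph V) (v : V)
    (hv : IsWellCovered (G.induce ({v}ᶜ : Set V)))
    {S T : Finset V} (hS : MaxAvoid G ({v} : Set V) S) (hT : MaxAvoid G ({v} : Set V) T) :
    S.card = T.card := by
  classical
  set p : V → Prop := fun x => x ∈ ({v}ᶜ : Set V) with hp
  have key : ∀ U : Finset V, MaxAvoid G ({v} : Set V) U →
      IsMaximalIndepSet (G.induce ({v}ᶜ : Set V)) (U.subtype p) ∧ (U.subtype p).card = U.card := by
    intro U hU
    obtain ⟨hUi, hUv, hUdom⟩ := hU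
    have hcard : (U.subtype p).card = U.card := by
      rw [Finset.card_subtype]
      congr 1
      apply Finset.filter_true_of_mem
      intro x hx
      exact hUv x hx
    refine ⟨⟨?_, ?_⟩, hcard⟩
    · intro a ha b hb hadj
      have hadj' : G.Adj ↑a ↑b := by simpa using hadj
      exact hUi (Finset.mem_subtype.1 ha) (Finset.mem_subtype.1 hb) hadj'
    · intro T' hT'i hsub
      refine Finset.Subset.antisymm hsub (fun x hx => ?_)
      by_contra hxU
      have hxU' : (x : V) ∉ U := fun h => hxU (Finset.mem_subtype.2 h)
      have hxv : (x : V) ∉ ({v} : Set V) := x.2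
      obtain ⟨u, huU, hadj⟩ := hUdom x hxv hxU'
      have huv : u ∈ ({v}ᶜ : Set V) := hUv u huU
      have hmem : (⟨u, huv⟩ : ({v}ᶜ : Set V)) ∈ T' := hsub (Finset.mem_subtype.2 huU)
      have : (G.induce ({v}ᶜ : Set V)).Adj ⟨u, huv⟩ x := by simpa using hadj
      exact hT'i hmem hx this
  obtain ⟨hSm, hSc⟩ := key S hS
  obtain ⟨hTm, hTc⟩ := key T hT
  rw [← hSc, ← hTc]
  exact hv _ _ hSm hTm

lemma exists_adj [Fintype V] (G : SimpleGraph V) (hconn : G.Connected)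
    (hcard : 2 ≤ Fintype.card V) (v : V) : ∃ u, G.Adj v u := by
  obtain ⟨u, hu⟩ := Fintype.exists_ne_of_one_lt_card (by omega) v
  obtain ⟨p⟩ := hconn.preconnected v u
  cases p with
  | nil => exact absurd rfl hu
  | cons h q => exact ⟨_, h⟩

/-- any MaxAvoid-{v} set has card = indepNum -/
lemma maxAvoid_singleton_card [Fintype V] (G : SimpleGraph V)
    (hWC : IsWellCovered G) (hconn : G.Connected) (hcard : 2 ≤ Fintype.card V)
    (hdel : ∀ v : V, IsWellCovered (G.induce ({v}ᶜ : Set V)))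
    (v : V) {S : Finset V} (hS : MaxAvoid G ({v} : Set V) S) : S.card = indepNum G := by
  obtain ⟨u, hu⟩ := exists_adj G hconn hcard v
  have hui : IsIndepSet G {u} := by
    intro a ha b hb hadj
    rw [Finset.mem_singleton] at ha hb
    subst ha; subst hb; exact G.loopless.irrefl _ hadj
  obtain ⟨T, hsubT, hT⟩ := exists_maxAvoid G (∅ : Set V) {u} hui (fun a _ => Set.notMem_empty a)
  have hTmax : IsMaximalIndepSet G T := (maxAvoid_empty_iff G T).1 hT
  have hvT : v ∉ T := by
    intro hvT
    exact hT.1 hvT (hsubT (Finset.mem_singleton_self u)) hu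
  have hTavoid : MaxAvoid G ({v} : Set V) T := by
    refine ⟨hT.1, ?_, ?_⟩
    · intro t ht htv
      rw [Set.mem_singleton_iff] at htv
      subst htv; exact hvT ht
    · intro w _ hwT
      exact hT.2.2 w (Set.notMem_empty w) hwT
  calc S.card = T.card := maxAvoid_singleton_card_eq G v (hdel v) hS hTavoid
    _ = indepNum G := maximal_card G hWC hTmax

/-- star lemma: every maximal indep set of G - N[v] misses a neighbor of v. -/
lemma star [Fintype V] (G : SimpleGraph V)
    (hWC : IsWellCovered G) (hconn : G.Connected) (hcard : 2 ≤ Fintype.card V)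
    (hdel : ∀ v : V, IsWellCovered (G.induce ({v}ᶜ : Set V)))
    (v : V) {T : Finset V} (hT : MaxAvoid G ({w | w = v ∨ G.Adj v w}) T) :
    ∃ w, G.Adj v w ∧ w ∉ T ∧ ∀ t ∈ T, ¬ G.Adj t w := by
  obtain ⟨hTi, hTN, hTdom⟩ := hT
  have hvT : v ∉ T := fun h => hTN v h (Or.inl rfl)
  have hvadj : ∀ u ∈ T, ¬ G.Adj u v := fun u hu hadj => hTN u hu (Or.inr hadj.symm)
  have hins : MaxAvoid G (∅ : Set V) (insert v T) := by
    refine ⟨indep_insert hTi hvadj, fun t _ => Set.notMem_empty t, ?_⟩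
    intro w _ hw
    have hwv : w ≠ v := fun h => hw (h ▸ Finset.mem_insert_self v T)
    have hwT : w ∉ T := fun h => hw (Finset.mem_insert_of_mem h)
    by_cases hadj : G.Adj v w
    · exact ⟨v, Finset.mem_insert_self v T, hadj⟩
    · have hwN : w ∉ ({w | w = v ∨ G.Adj v w} : Set V) := by
        intro h; rcases h with h | h
        · exact hwv h
        · exact hadj h
      obtain ⟨u, huT, hu⟩ := hTdom w hwN hwT
      exact ⟨u, Finset.mem_insert_of_mem huT, hu⟩
  have hins_card : T.card + 1 = indepNum G := by
    have := maximal_card G hWC ((maxAvoid_empty_iff G _).1 hins)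
    rwa [Finset.card_insert_of_notMem hvT] at this
  by_contra hno
  push_neg at hno
  -- hno : ∀ w, G.Adj v w → w ∈ T ∨ ∃ t ∈ T, G.Adj t w  (shape check)
  have hdomv : ∀ w, G.Adj v w → ∃ t ∈ T, G.Adj t w := by
    intro w hadj
    have hwT : w ∉ T := fun h => hTN w h (Or.inr hadj)
    obtain ⟨t, ht, hta⟩ := hno w hadj hwT
    exact ⟨t, ht, hta⟩
  have hTav : MaxAvoid G ({v} : Set V) T := by
    refine ⟨hTi, fun t ht htv => hTN t ht (Or.inl htv), ?_⟩
    intro w hwv hwT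
    by_cases hadj : G.Adj v w
    · exact hdomv w hadj
    · have hwN : w ∉ ({w | w = v ∨ G.Adj v w} : Set V) := by
        intro h; rcases h with h | h
        · exact hwv h
        · exact hadj h
      exact hTdom w hwN hwT
  have := maxAvoid_singleton_card G hWC hconn hcard hdel v hTav
  omega

-- STAGE 3 : main lemma
lemma key_lemma [Fintype V] (G : SimpleGraph V) (hconn : G.Connected)
    (hK2 : ¬ Nonempty (G ≃g (⊤ : SimpleGraph (Fin 2))))
    (hWC : IsWellCovered G) (hcard : 2 ≤ Fintype.card V)
    (hdel : ∀ v : V, IsWellCovered (G.induce ({v}ᶜ : Set V))) :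
    ∀ A : Finset V, A.Nonempty → IsIndepSet G A → A.card < (neigh G A).card := by
  intro A hAne hAi
  by_contra hlt
  push_neg at hlt
  -- generalized private-neighbor producer
  have priv2 : ∀ (v : V) (B : Finset V), IsIndepSet G B →
      (∀ b ∈ B, b ≠ v ∧ ¬ G.Adj v b) → ∃ w, G.Adj v w ∧ ∀ b ∈ B, ¬ G.Adj b w := by
    intro v B hBi hBav
    obtain ⟨T, hBT, hT⟩ := exists_maxAvoid G {w | w = v ∨ G.Adj v w} B hBi
      (fun b hb h => by
        rcases h with h | h
        · exact (hBav b hb).1 h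
        · exact (hBav b hb).2 h)
    obtain ⟨w, hadj, hwT, hwpriv⟩ := star G hWC hconn hcard hdel v hT
    exact ⟨w, hadj, fun b hb => hwpriv b (hBT hb)⟩
  have priv : ∀ v : V, ∃ w, v ∈ A → (G.Adj v w ∧ ∀ a ∈ A, a ≠ v → ¬ G.Adj a w) := by
    intro v
    by_cases hv : v ∈ A
    · have hBi : IsIndepSet G (A.erase v) := fun u hu x hx =>
        hAi (Finset.mem_of_mem_erase hu) (Finset.mem_of_mem_erase hx)
      have hBav : ∀ b ∈ A.erase v, b ≠ v ∧ ¬ G.Adj v b := fun b hb =>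
        ⟨Finset.ne_of_mem_erase hb, hAi hv (Finset.mem_of_mem_erase hb)⟩
      obtain ⟨w, h1, h2⟩ := priv2 v (A.erase v) hBi hBav
      exact ⟨w, fun _ => ⟨h1, fun a ha hane => h2 a (Finset.mem_erase.2 ⟨hane, ha⟩)⟩⟩
    · exact ⟨v, fun h => absurd h hv⟩
  choose f hf using priv
  have hfadj : ∀ v ∈ A, G.Adj v (f v) := fun v hv => (hf v hv).1
  have hfpriv : ∀ v ∈ A, ∀ a ∈ A, a ≠ v → ¬ G.Adj a (f v) := fun v hv a ha h => (hf v hv).2 a ha h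
  have hfneigh : ∀ v ∈ A, f v ∈ neigh G A := fun v hv =>
    Finset.mem_filter.2 ⟨Finset.mem_univ _, v, hv, hfadj v hv⟩
  have hfnotA : ∀ v ∈ A, f v ∉ A := fun v hv h => hAi hv h (hfadj v hv)
  have hinj : Set.InjOn f ↑A := by
    intro a ha b hb h
    by_contra hne
    exact hfpriv b (Finset.mem_coe.1 hb) a (Finset.mem_coe.1 ha) hne (h ▸ hfadj a (Finset.mem_coe.1 ha))
  have hle : A.card ≤ (neigh G A).card :=
    Finset.card_le_card_of_injOn f (fun a ha => hfneigh a ha) hinj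
  have heq : (neigh G A).card = A.card := le_antisymm hlt hle
  have himg : A.image f = neigh G A := by
    apply Finset.eq_of_subset_of_card_le
    · intro w hw
      obtain ⟨a, ha, hfa⟩ := Finset.mem_image.1 hw
      exact hfa ▸ hfneigh a ha
    · rw [Finset.card_image_of_injOn hinj, heq]
  have stepII : ∀ v ∈ A, ∀ w, G.Adj v w → w = f v := by
    intro v hv w hadj
    have hwn : w ∈ neigh G A := Finset.mem_filter.2 ⟨Finset.mem_univ _, v, hv, hadj⟩
    rw [← himg] at hwn
    obtain ⟨u, hu, hw⟩ := Finset.mem_image.1 hwn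
    rcases eq_or_ne u v with h | h
    · rw [← hw, h]
    · have := hfpriv u hu v hv h.symm
      rw [hw] at this
      exact absurd hadj this
  have closed : ∀ x, (x ∈ A ∨ x ∈ neigh G A) → ∀ y, G.Adj x y → (y ∈ A ∨ y ∈ neigh G A) := by
    intro x hx y hxy
    rcases hx with hx | hx
    · exact Or.inr (Finset.mem_filter.2 ⟨Finset.mem_univ _, x, hx, hxy⟩)
    · rw [← himg] at hx
      obtain ⟨v, hv, hw⟩ := Finset.mem_image.1 hx
      subst hw
      by_contra hy
      push_neg at hy
      obtain ⟨hyA, hyN⟩ := hy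
      have hynadj : ∀ a ∈ A, ¬ G.Adj a y := fun a ha h =>
        hyN (Finset.mem_filter.2 ⟨Finset.mem_univ _, a, ha, h⟩)
      have hBi : IsIndepSet G (insert y (A.erase v)) :=
        indep_insert (fun u hu x' hx' => hAi (Finset.mem_of_mem_erase hu) (Finset.mem_of_mem_erase hx'))
          (fun a ha => hynadj a (Finset.mem_of_mem_erase ha))
      have hBav : ∀ b ∈ insert y (A.erase v), b ≠ v ∧ ¬ G.Adj v b := by
        intro b hb
        rcases Finset.mem_insert.1 hb with h | h
        · subst h
          exact ⟨fun h' => hyA (h' ▸ hv), fun h' => hynadj v hv h'⟩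
        · exact ⟨Finset.ne_of_mem_erase h, hAi hv (Finset.mem_of_mem_erase h)⟩
      obtain ⟨w, hwadj, hwpriv⟩ := priv2 v _ hBi hBav
      have hwfv : w = f v := stepII v hv w hwadj
      have hnadj : ¬ G.Adj y w := hwpriv y (Finset.mem_insert_self _ _)
      rw [hwfv] at hnadj
      exact hnadj hxy.symm
  have aux : ∀ (x y : V) (p : G.Walk x y), (x ∈ A ∨ x ∈ neigh G A) → (y ∈ A ∨ y ∈ neigh G A) := by
    intro x y p
    induction p with
    | nil => exact id
    | cons h q ih => exact fun hx => ih (closed _ hx _ h)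
  obtain ⟨v₀, hv₀⟩ := hAne
  have hall : ∀ y : V, y ∈ A ∨ y ∈ neigh G A := by
    intro y
    obtain ⟨p⟩ := hconn.preconnected v₀ y
    exact aux v₀ y p (Or.inl hv₀)
  have hAmax : IsMaximalIndepSet G A := by
    rw [← maxAvoid_empty_iff]
    refine ⟨hAi, fun t _ => Set.notMem_empty t, ?_⟩
    intro w _ hwA
    rcases hall w with h | h
    · exact absurd h hwA
    · exact (Finset.mem_filter.1 h).2
  have hAcard : A.card = indepNum G := maximal_card G hWC hAmax
  by_cases hA1 : A.card = 1
  · -- G ≅ K₂, contradiction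
    obtain ⟨v, rfl⟩ := Finset.card_eq_one.1 hA1
    have hv : v ∈ ({v} : Finset V) := Finset.mem_singleton_self v
    have hadjv : G.Adj v (f v) := hfadj v hv
    have hfvne : f v ≠ v := fun h => G.loopless.irrefl v (by rw [h] at hadjv; exact hadjv)
    have hall2 : ∀ y : V, y = v ∨ y = f v := by
      intro y
      rcases hall y with h | h
      · exact Or.inl (Finset.mem_singleton.1 h)
      · rw [← himg] at h
        obtain ⟨u, hu, hw⟩ := Finset.mem_image.1 h
        rw [Finset.mem_singleton] at hu
        subst hu
        exact Or.inr hw.symm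
    have hiff : ∀ a b : V, a ≠ b ↔ G.Adj a b := by
      intro a b
      rcases hall2 a with ha | ha
      · rcases hall2 b with hb | hb
        · rw [ha, hb]; simp
        · rw [ha, hb]; exact iff_of_true (fun h => hfvne h.symm) hadjv
      · rcases hall2 b with hb | hb
        · rw [ha, hb]; exact iff_of_true hfvne hadjv.symm
        · rw [ha, hb]; simp
    have e : V ≃ Fin 2 :=
      { toFun := fun x => if x = v then 0 else 1
        invFun := fun i => if i = 0 then v else f v
        left_inv := by
          intro x
          by_cases hx : x = v
          · simp [hx]
          · have hxf : x = f v := (hall2 x).resolve_left hx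
            dsimp only
            rw [if_neg hx, if_neg (by decide : ¬((1 : Fin 2) = 0))]
            exact hxf.symm
        right_inv := by
          intro i
          fin_cases i
          · simp
          · simp [hfvne] }
    have iso : G ≃g (⊤ : SimpleGraph (Fin 2)) :=
      { toEquiv := e
        map_rel_iff' := by
          intro a b
          simp only [SimpleGraph.top_adj, ne_eq, EmbeddingLike.apply_eq_iff_eq]
          exact hiff a b }
    exact hK2 ⟨iso⟩
  · have hA2 : 2 ≤ A.card := by
      have := Finset.card_pos.2 (⟨v₀, hv₀⟩ : A.Nonempty)
      omega
    have hedge : ∃ u ∈ A, ∃ u' ∈ A, u ≠ u' ∧ G.Adj (f u) (f u') := by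
      by_contra hnoe
      push_neg at hnoe
      obtain ⟨v, hv, v', hv', hvv'⟩ := Finset.one_lt_card.1 hA2
      have closed2 : ∀ x, (x = v ∨ x = f v) → ∀ y, G.Adj x y → (y = v ∨ y = f v) := by
        intro x hx y hxy
        rcases hx with h | h
        · subst h
          exact Or.inr (stepII x hv y hxy)
        · subst h
          rcases hall y with hy | hy
          · have h1 : f v = f y := stepII y hy (f v) hxy.symm
            exact Or.inl (hinj (Finset.mem_coe.2 hy) (Finset.mem_coe.2 hv) h1.symm)
          · rw [← himg] at hy
            obtain ⟨u, hu, hw⟩ := Finset.mem_image.1 hy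
            subst hw
            rcases eq_or_ne u v with h | hne
            · subst h; exact Or.inr rfl
            · exact absurd hxy (hnoe v hv u hu hne.symm)
      have aux2 : ∀ (x y : V) (p : G.Walk x y), (x = v ∨ x = f v) → (y = v ∨ y = f v) := by
        intro x y p
        induction p with
        | nil => exact id
        | cons h q ih => exact fun hx => ih (closed2 _ hx _ h)
      obtain ⟨p⟩ := hconn.preconnected v v'
      rcases aux2 v v' p (Or.inl rfl) with h | h
      · exact hvv' h.symm
      · exact hfnotA v hv (h ▸ hv')
    obtain ⟨u, hu, u', hu', huu', hedgeA⟩ := hedge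
    set E := (A.erase u).erase u' with hE
    have hEA : ∀ a ∈ E, a ∈ A := fun a ha =>
      Finset.mem_of_mem_erase (Finset.mem_of_mem_erase ha)
    have hEi : IsIndepSet G E := fun a ha b hb => hAi (hEA a ha) (hEA b hb)
    have hfu'E : ∀ a ∈ E, ¬ G.Adj a (f u') := by
      intro a ha hadj
      have h1 : f u' = f a := stepII a (hEA a ha) (f u') hadj
      have h2 : u' = a := hinj (Finset.mem_coe.2 hu') (Finset.mem_coe.2 (hEA a ha)) h1
      exact (Finset.ne_of_mem_erase ha) h2.symm
    have hTi : IsIndepSet G (insert (f u') E) := indep_insert hEi hfu'E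
    have hfu'A : f u' ∉ A := hfnotA u' hu'
    have hTav : MaxAvoid G ({u} : Set V) (insert (f u') E) := by
      refine ⟨hTi, ?_, ?_⟩
      · intro t ht htu
        rw [Set.mem_singleton_iff] at htu
        subst htu
        rcases Finset.mem_insert.1 ht with h | h
        · exact hfu'A (h ▸ hu)
        · exact (Finset.ne_of_mem_erase (Finset.mem_of_mem_erase h)) rfl
      · intro w hwu hwT
        rw [Set.mem_singleton_iff] at hwu
        rcases hall w with hw | hw
        · rcases eq_or_ne w u' with h | hne
          · subst h
            exact ⟨f w, Finset.mem_insert_self _ _, (hfadj w hw).symm⟩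
          · have : w ∈ E := Finset.mem_erase.2 ⟨hne, Finset.mem_erase.2 ⟨hwu, hw⟩⟩
            exact absurd (Finset.mem_insert_of_mem this) hwT
        · rw [← himg] at hw
          obtain ⟨a, ha, hfa⟩ := Finset.mem_image.1 hw
          subst hfa
          rcases eq_or_ne a u with h | hau
          · subst h
            exact ⟨f u', Finset.mem_insert_self _ _, hedgeA.symm⟩
          · rcases eq_or_ne a u' with h | hau'
            · subst h
              exact absurd (Finset.mem_insert_self _ _) hwT
            · have haE : a ∈ E := Finset.mem_erase.2 ⟨hau', Finset.mem_erase.2 ⟨hau, ha⟩⟩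
              exact ⟨a, Finset.mem_insert_of_mem haE, hfadj a ha⟩
    have hTcard := maxAvoid_singleton_card G hWC hconn hcard hdel u hTav
    have hfu'E2 : f u' ∉ E := fun h => hfu'A (hEA _ h)
    have hu'mem : u' ∈ A.erase u := Finset.mem_erase.2 ⟨huu'.symm, hu'⟩
    have hc1 : (insert (f u') E).card = A.card - 1 := by
      rw [Finset.card_insert_of_notMem hfu'E2, hE, Finset.card_erase_of_mem hu'mem,
        Finset.card_erase_of_mem hu]
      omega
    omega

/-- If `G` is a connected `1`-well-covered graph not isomorphic to `K₂`,
then `G` has at least `2α(G) + 1` vertices and `|A| < |N(A)|` holds for every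
nonempty independent set `A`. -/
theorem stmt_18 {V : Type*} [Fintype V] (G : SimpleGraph V)
    (hconn : G.Connected) (hK2 : ¬ Nonempty (G ≃g (⊤ : SimpleGraph (Fin 2))))
    (h1wc : IsOneWellCovered G) :
    2 * indepNum G + 1 ≤ Fintype.card V ∧
    ∀ A : Finset V, A.Nonempty → IsIndepSet G A → A.card < (neigh G A).card := by
  obtain ⟨hWC, hcard, hdel⟩ := h1wc
  have key := key_lemma G hconn hK2 hWC hcard hdel
  constructor
  · obtain ⟨S₀, hS₀max, hS₀card⟩ := exists_maximum G
    have hVne : Nonempty V := Fintype.card_pos_iff.1 (by omega)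
    obtain ⟨v⟩ := hVne
    have h1 : 1 ≤ indepNum G := by
      have hsing : IsIndepSet G {v} := by
        intro a ha b hb hadj
        rw [Finset.mem_singleton] at ha hb
        subst ha; subst hb
        exact G.loopless.irrefl _ hadj
      have := indep_card_le_indepNum G hsing
      simpa using this
    have hS₀ne : S₀.Nonempty := Finset.card_pos.1 (by omega)
    have hkey := key S₀ hS₀ne hS₀max.1
    have hdisj : Disjoint S₀ (neigh G S₀) := by
      rw [Finset.disjoint_left]
      intro a ha hn
      obtain ⟨u, hu, hadj⟩ := (Finset.mem_filter.1 hn).2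
      exact hS₀max.1 hu ha hadj
    have hun := Finset.card_union_of_disjoint hdisj
    have hle := Finset.card_le_univ (S₀ ∪ neigh G S₀)
    omega
  · exact key
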